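/- Let w = (w_j)_{j≥1} be a nondecreasing sequence of weights with 1 ≤ w_1 ≤ w_2 ≤ … such that Σ_{j≥1} w_j^{−2} < ∞. Then for every n ≥ 1, σ_n²(U(ℓ_∞(w))) = Σ_{j>n} w_j^{−2}, where U(ℓ_∞(w)) := {x ∈ ℓ₂ : sup_{j≥1} |w_j x_j| ≤ 1} and σ_n(U(ℓ_∞(w))) := sup_{x ∈ U(ℓ_∞(w))} σ_n(x). -/

import Mathlib

open scoped BigOperators

/-- The `ℓ₂` norm of a real sequence. -/
noncomputable def l2norm (x : ℕ → ℝ) : ℝ := Real.sqrt (∑' j, (x j) ^ 2)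

/-- The error of best `n`-term approximation of `x` in `ℓ₂`:
the infimum of `‖x - S‖_{ℓ₂}` over all sequences `S` supported on at most `n` indices. -/
noncomputable def sigman (n : ℕ) (x : ℕ → ℝ) : ℝ :=
  sInf {e : ℝ | ∃ S : ℕ → ℝ, (Function.support S).Finite ∧
    (Function.support S).ncard ≤ n ∧ e = l2norm (fun j => x j - S j)}

/-- `xs` is the decreasing rearrangement of the absolute values of the entries of `x`:
it is nonincreasing and is obtained by rearranging `(|x j|)` via a bijection of the indices. -/
def IsDecRearrangement (x xs : ℕ → ℝ) : Prop :=
  Antitone xs ∧ ∃ e : ℕ ≃ ℕ, ∀ j, xs j = |x (e j)|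

private lemma summable_sub_sq {x S : ℕ → ℝ} (hx : Summable fun j => (x j) ^ 2)
    (hS : (Function.support S).Finite) : Summable fun j => (x j - S j) ^ 2 := by
  have h0 : ∀ j ∉ hS.toFinset, ((x j - S j) ^ 2 - (x j) ^ 2) = 0 := by
    intro j hj
    simp only [Set.Finite.mem_toFinset, Function.mem_support, not_not] at hj
    simp [hj]
  have h1 : Summable fun j => (x j - S j) ^ 2 - (x j) ^ 2 :=
    summable_of_ne_finset_zero h0
  simpa using h1.add hx

private lemma sigman_set_nonempty (n : ℕ) (x : ℕ → ℝ) :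
    {e : ℝ | ∃ S : ℕ → ℝ, (Function.support S).Finite ∧
      (Function.support S).ncard ≤ n ∧ e = l2norm (fun j => x j - S j)}.Nonempty := by
  refine ⟨l2norm (fun j => x j - (fun _ => (0:ℝ)) j), (fun _ => (0:ℝ)), ?_, ?_, rfl⟩
  · simp [Function.support]
  · simp [Function.support]

private lemma sigman_set_bddBelow (n : ℕ) (x : ℕ → ℝ) :
    BddBelow {e : ℝ | ∃ S : ℕ → ℝ, (Function.support S).Finite ∧
      (Function.support S).ncard ≤ n ∧ e = l2norm (fun j => x j - S j)} := by
  refine ⟨0, fun e he => ?_⟩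
  obtain ⟨S, _, _, rfl⟩ := he
  exact Real.sqrt_nonneg _

private lemma sigman_nonneg (n : ℕ) (x : ℕ → ℝ) : 0 ≤ sigman n x :=
  le_csInf (sigman_set_nonempty n x) (fun e he => by
    obtain ⟨S, _, _, rfl⟩ := he; exact Real.sqrt_nonneg _)

private lemma summable_tail (w : ℕ → ℝ) (hsum : Summable fun j => ((w j)⁻¹) ^ 2) (n : ℕ) :
    Summable fun k => ((w (n + k))⁻¹) ^ 2 := by
  have h := (summable_nat_add_iff (f := fun j => ((w j)⁻¹) ^ 2) n).mpr hsum
  exact h.congr fun k => by rw [Nat.add_comm]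

private lemma sigman_le_sqrt_tail (w : ℕ → ℝ) (hw1 : 1 ≤ w 0) (hw : Monotone w)
    (hsum : Summable fun j => ((w j)⁻¹) ^ 2) (n : ℕ)
    (x : ℕ → ℝ) (hx2 : Summable fun j => (x j) ^ 2)
    (hxw : ∀ j, |w j * x j| ≤ 1) :
    sigman n x ≤ Real.sqrt (∑' j : ℕ, ((w (n + j))⁻¹) ^ 2) := by
  have hwpos : ∀ j, 0 < w j := fun j =>
    lt_of_lt_of_le zero_lt_one (hw1.trans (hw (Nat.zero_le j)))
  have hxsq : ∀ j, x j ^ 2 ≤ ((w j)⁻¹) ^ 2 := by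
    intro j
    have h1 : (w j * x j) ^ 2 ≤ 1 := by
      have := hxw j
      nlinarith [abs_nonneg (w j * x j), sq_abs (w j * x j)]
    have hne : w j ≠ 0 := ne_of_gt (hwpos j)
    have hid : x j ^ 2 = ((w j)⁻¹) ^ 2 * (w j * x j) ^ 2 := by
      field_simp
    rw [hid]
    calc ((w j)⁻¹) ^ 2 * (w j * x j) ^ 2 ≤ ((w j)⁻¹) ^ 2 * 1 := by
          apply mul_le_mul_of_nonneg_left h1 (by positivity)
      _ = ((w j)⁻¹) ^ 2 := mul_one _
  set S₀ : ℕ → ℝ := fun j => if j < n then x j else 0 with hS₀def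
  have hsub : Function.support S₀ ⊆ ↑(Finset.range n) := by
    intro j hj
    simp only [Function.mem_support, hS₀def] at hj
    by_contra hc
    simp only [Finset.coe_range, Set.mem_Iio, not_lt] at hc
    exact hj (if_neg (not_lt.mpr hc))
  have hS₀fin : (Function.support S₀).Finite :=
    Set.Finite.subset (Finset.range n).finite_toSet hsub
  have hS₀card : (Function.support S₀).ncard ≤ n := by
    have h := Set.ncard_le_ncard hsub (Finset.range n).finite_toSet
    rwa [Set.ncard_coe_finset, Finset.card_range] at h
  have herr_sum : Summable fun j => (x j - S₀ j) ^ 2 := summable_sub_sq hx2 hS₀fin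
  set g : ℕ → ℝ := fun j => if j < n then 0 else ((w j)⁻¹) ^ 2 with hgdef
  have hg_le : ∀ j, g j ≤ ((w j)⁻¹) ^ 2 := by
    intro j; by_cases h : j < n <;> simp [hgdef, h] <;> positivity
  have hg_nonneg : ∀ j, 0 ≤ g j := by
    intro j; by_cases h : j < n <;> simp [hgdef, h] <;> positivity
  have hg_sum : Summable g := Summable.of_nonneg_of_le hg_nonneg hg_le hsum
  have h1 : ∑' j, (x j - S₀ j) ^ 2 ≤ ∑' j, g j := by
    apply Summable.tsum_le_tsum _ herr_sum hg_sum
    intro j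
    by_cases h : j < n
    · simp [hS₀def, hgdef, h]
    · simp only [hS₀def, hgdef, if_neg h, sub_zero]
      exact hxsq j
  have h2 : ∑' j, g j = ∑' j : ℕ, ((w (n + j))⁻¹) ^ 2 := by
    have h3 := Summable.sum_add_tsum_nat_add n hg_sum
    have h4 : ∑ i ∈ Finset.range n, g i = 0 := by
      apply Finset.sum_eq_zero
      intro i hi
      simp [hgdef, Finset.mem_range.mp hi]
    have h5 : ∀ i : ℕ, g (i + n) = ((w (n + i))⁻¹) ^ 2 := by
      intro i
      have : ¬ (i + n < n) := by omega
      simp [hgdef, this, Nat.add_comm]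
    rw [h4, zero_add] at h3
    rw [← h3]
    exact tsum_congr h5
  have hmem : l2norm (fun j => x j - S₀ j) ∈ {e : ℝ | ∃ S : ℕ → ℝ,
      (Function.support S).Finite ∧ (Function.support S).ncard ≤ n ∧
      e = l2norm (fun j => x j - S j)} := ⟨S₀, hS₀fin, hS₀card, rfl⟩
  have hle : sigman n x ≤ l2norm (fun j => x j - S₀ j) :=
    csInf_le (sigman_set_bddBelow n x) hmem
  refine hle.trans ?_
  unfold l2norm
  exact Real.sqrt_le_sqrt (h1.trans_eq h2)

private lemma sqrt_tail_le_sigman (w : ℕ → ℝ) (hw1 : 1 ≤ w 0) (hw : Monotone w)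
    (hsum : Summable fun j => ((w j)⁻¹) ^ 2) (n : ℕ) :
    Real.sqrt (∑' j : ℕ, ((w (n + j))⁻¹) ^ 2) ≤ sigman n (fun j => (w j)⁻¹) := by
  have hwpos : ∀ j, 0 < w j := fun j =>
    lt_of_lt_of_le zero_lt_one (hw1.trans (hw (Nat.zero_le j)))
  apply le_csInf (sigman_set_nonempty n _)
  rintro e ⟨S, hSfin, hScard, rfl⟩
  set G : Finset ℕ := hSfin.toFinset with hGdef
  have hGcard : G.card ≤ n := by
    rwa [← Set.ncard_eq_toFinset_card _ hSfin]
  classical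
  set p : ℕ → Prop := fun j => j ∉ G with hpdef
  have hinf : (setOf p).Infinite := by
    have : setOf p = (↑G : Set ℕ)ᶜ := by ext j; simp [hpdef]; exact Iff.rfl
    rw [this]
    exact (G.finite_toSet).infinite_compl
  have hnth_mem : ∀ k, Nat.nth p k ∉ G := fun k => Nat.nth_mem_of_infinite hinf k
  have hnth_le : ∀ k, Nat.nth p k ≤ n + k := by
    intro k
    have hcount : k < Nat.count p (n + k + 1) := by
      have heq : (Finset.filter (fun x => p x) (Finset.range (n + k + 1))).card +
          (Finset.filter (fun x => ¬ p x) (Finset.range (n + k + 1))).card = n + k + 1 := by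
        simpa using Finset.card_filter_add_card_filter_not
          (s := Finset.range (n + k + 1)) (p := p)
      have hsub : Finset.filter (fun x => ¬ p x) (Finset.range (n + k + 1)) ⊆ G := by
        intro j hj
        simp only [Finset.mem_filter, hpdef, not_not] at hj
        exact hj.2
      have hle : (Finset.filter (fun x => ¬ p x) (Finset.range (n + k + 1))).card ≤ n :=
        (Finset.card_le_card hsub).trans hGcard
      rw [Nat.count_eq_card_filter_range]
      omega
    have := Nat.nth_lt_of_lt_count hcount
    omega
  set ind : ℕ → ℝ := fun j => if j ∈ G then 0 else ((w j)⁻¹) ^ 2 with hinddef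
  have hind_nonneg : ∀ j, 0 ≤ ind j := by
    intro j; by_cases h : j ∈ G <;> simp [hinddef, h] <;> positivity
  have hind_le : ∀ j, ind j ≤ ((w j)⁻¹) ^ 2 := by
    intro j; by_cases h : j ∈ G <;> simp [hinddef, h] <;> positivity
  have hind_sum : Summable ind := Summable.of_nonneg_of_le hind_nonneg hind_le hsum
  have hf_sum : Summable fun k => ((w (n + k))⁻¹) ^ 2 := summable_tail w hsum n
  have step1 : ∑' k : ℕ, ((w (n + k))⁻¹) ^ 2 ≤ ∑' j, ind j := by
    apply Summable.tsum_le_tsum_of_inj (Nat.nth p) (Nat.nth_injective hinf)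
      (fun c _ => hind_nonneg c) _ hf_sum hind_sum
    intro k
    have h1 : ind (Nat.nth p k) = ((w (Nat.nth p k))⁻¹) ^ 2 := by
      simp [hinddef, hnth_mem k]
    rw [h1]
    have h2 : w (Nat.nth p k) ≤ w (n + k) := hw (hnth_le k)
    have h3 : (w (n + k))⁻¹ ≤ (w (Nat.nth p k))⁻¹ :=
      inv_anti₀ (hwpos _) h2
    exact pow_le_pow_left₀ (inv_nonneg.mpr (hwpos _).le) h3 2
  have herr_sum : Summable fun j => ((w j)⁻¹ - S j) ^ 2 := summable_sub_sq hsum hSfin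
  have step2 : ∑' j, ind j ≤ ∑' j, ((w j)⁻¹ - S j) ^ 2 := by
    apply Summable.tsum_le_tsum _ hind_sum herr_sum
    intro j
    by_cases h : j ∈ G
    · simp only [hinddef, if_pos h]
      positivity
    · have hS0 : S j = 0 := by
        by_contra hc
        exact h (hSfin.mem_toFinset.mpr hc)
      simp [hinddef, h, hS0]
  unfold l2norm
  exact Real.sqrt_le_sqrt (step1.trans step2)

/-- If `∑ w_j^{-2} < ∞`, then `σ_n²(U(ℓ_∞(w))) = ∑_{j > n} w_j^{-2}`, where
`U(ℓ_∞(w))` is the set of `x ∈ ℓ₂` with `sup_j |w_j x_j| ≤ 1`. -/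
theorem sigman_sq_unitBall_winfty_eq (w : ℕ → ℝ) (hw1 : 1 ≤ w 0) (hw : Monotone w)
    (hsum : Summable fun j => ((w j)⁻¹) ^ 2) (n : ℕ) (hn : 1 ≤ n) :
    sSup {e : ℝ | ∃ x : ℕ → ℝ, Summable (fun j => (x j) ^ 2) ∧
        (∀ j, |w j * x j| ≤ 1) ∧ e = sigman n x ^ 2} =
      ∑' j : ℕ, ((w (n + j))⁻¹) ^ 2 := by
  have hwpos : ∀ j, 0 < w j := fun j =>
    lt_of_lt_of_le zero_lt_one (hw1.trans (hw (Nat.zero_le j)))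
  set T : ℝ := ∑' j : ℕ, ((w (n + j))⁻¹) ^ 2 with hTdef
  have hT0 : 0 ≤ T := tsum_nonneg (fun j => by positivity)
  have hub : ∀ e ∈ {e : ℝ | ∃ x : ℕ → ℝ, Summable (fun j => (x j) ^ 2) ∧
      (∀ j, |w j * x j| ≤ 1) ∧ e = sigman n x ^ 2}, e ≤ T := by
    rintro e ⟨x, hx2, hxw, rfl⟩
    have h := sigman_le_sqrt_tail w hw1 hw hsum n x hx2 hxw
    calc sigman n x ^ 2 ≤ Real.sqrt T ^ 2 :=
          pow_le_pow_left₀ (sigman_nonneg n x) h 2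
      _ = T := Real.sq_sqrt hT0
  have hxw' : ∀ j, |w j * (w j)⁻¹| ≤ 1 := by
    intro j
    rw [mul_inv_cancel₀ (ne_of_gt (hwpos j))]
    simp
  have hmem : T ∈ {e : ℝ | ∃ x : ℕ → ℝ, Summable (fun j => (x j) ^ 2) ∧
      (∀ j, |w j * x j| ≤ 1) ∧ e = sigman n x ^ 2} := by
    refine ⟨fun j => (w j)⁻¹, hsum, hxw', ?_⟩
    have hle := sigman_le_sqrt_tail w hw1 hw hsum n (fun j => (w j)⁻¹) hsum hxw'
    have hge := sqrt_tail_le_sigman w hw1 hw hsum n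
    have heq : sigman n (fun j => (w j)⁻¹) = Real.sqrt T := le_antisymm hle hge
    rw [heq, Real.sq_sqrt hT0]
  exact le_antisymm (csSup_le ⟨T, hmem⟩ hub) (le_csSup ⟨T, hub⟩ hmem)
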